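/- Let μ : 2^V → ℕ satisfy symmetry, linear boundedness and submodularity. For any A ⊆ V there exists a chain of subsets B_0 ⊊ B_1 ⊊ ... ⊊ B_{|A|-μ(A)} = A with |B_i| = μ(A) + i and μ(B_i) ≥ μ(A) for all i; in particular B_0 satisfies μ(B_0) = |B_0|. -/

import Mathlib

section Aux

variable {V : Type*} [Fintype V] [DecidableEq V] (μ : Finset V → ℕ)

lemma aux_erase_one (hbound : ∀ A : Finset V, μ A ≤ A.card)
    (hsub : ∀ A B : Finset V, μ (A ∪ B) + μ (A ∩ B) ≤ μ A + μ B)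
    (B : Finset V) (x : V) : μ B ≤ μ (B.erase x) + 1 := by
  by_cases hx : x ∈ B
  · have h := hsub (B.erase x) {x}
    have h1 : B.erase x ∪ {x} = B := by
      ext a; simp [Finset.mem_erase]
      constructor
      · rintro (rfl | ⟨_, h⟩) <;> tauto
      · intro ha; by_cases hax : a = x <;> tauto
    have h2 : B.erase x ∩ {x} = ∅ := by
      ext a; simp [Finset.mem_erase]
    rw [h1, h2] at h
    have h3 : μ ({x} : Finset V) ≤ 1 := by
      simpa using hbound {x}
    omega
  · rw [Finset.erase_eq_of_notMem hx]; omega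

lemma aux_step (hbound : ∀ A : Finset V, μ A ≤ A.card)
    (hsub : ∀ A B : Finset V, μ (A ∪ B) + μ (A ∩ B) ≤ μ A + μ B)
    (B : Finset V) (h : μ B < B.card) : ∃ x ∈ B, μ B ≤ μ (B.erase x) := by
  by_contra hc
  push_neg at hc
  have claim : ∀ C : Finset V, C ⊆ B → C.card ≤ μ C := by
    intro C
    induction C using Finset.induction_on with
    | empty => simp
    | @insert x C hx ih =>
      intro hsubB
      have hxB : x ∈ B := hsubB (Finset.mem_insert_self x C)
      have hCB : C ⊆ B := (Finset.subset_insert x C).trans hsubB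
      have h1 : insert x C ∪ B.erase x = B := by
        ext a
        simp only [Finset.mem_union, Finset.mem_insert, Finset.mem_erase]
        constructor
        · rintro ((rfl | ha) | ⟨_, ha⟩) <;> [exact hxB; exact hCB ha; exact ha]
        · intro ha; by_cases hax : a = x <;> tauto
      have h2 : insert x C ∩ B.erase x = C := by
        ext a
        simp only [Finset.mem_inter, Finset.mem_insert, Finset.mem_erase]
        constructor
        · rintro ⟨rfl | ha, hax, _⟩ <;> tauto
        · intro ha
          have : a ≠ x := fun h => hx (h ▸ ha)
          exact ⟨Or.inr ha, this, hCB ha⟩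
      have hs := hsub (insert x C) (B.erase x)
      rw [h1, h2] at hs
      have hlt := hc x hxB
      have hcard : (insert x C).card = C.card + 1 := Finset.card_insert_of_notMem hx
      have := ih hCB
      omega
  have := claim B (le_refl _)
  omega

lemma aux_shrink (hbound : ∀ A : Finset V, μ A ≤ A.card)
    (hsub : ∀ A B : Finset V, μ (A ∪ B) + μ (A ∩ B) ≤ μ A + μ B)
    (m : ℕ) (B : Finset V) (hm : m ≤ μ B) (hc : m < B.card) :
    ∃ x ∈ B, m ≤ μ (B.erase x) := by
  rcases lt_or_eq_of_le hm with hlt | heq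
  · have hne : B.Nonempty := Finset.card_pos.mp (by omega)
    obtain ⟨x, hxB⟩ := hne
    exact ⟨x, hxB, by have := aux_erase_one μ hbound hsub B x; omega⟩
  · obtain ⟨x, hxB, hx⟩ := aux_step μ hbound hsub B (by omega)
    exact ⟨x, hxB, by omega⟩

end Aux

/-- For a symmetric, linearly bounded, submodular function `μ` and any `A`, there is a
chain `B_0 ⊊ B_1 ⊊ ... ⊊ B_{|A| - μ(A)} = A` with `|B_i| = μ(A) + i` and `μ(B_i) ≥ μ(A)`;
in particular `B_0` is full-`μ`-rank. -/
theorem stmt_5 {V : Type*} [Fintype V] [DecidableEq V] (μ : Finset V → ℕ)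
    (hsym : ∀ A : Finset V, μ Aᶜ = μ A)
    (hbound : ∀ A : Finset V, μ A ≤ A.card)
    (hsub : ∀ A B : Finset V, μ (A ∪ B) + μ (A ∩ B) ≤ μ A + μ B)
    (A : Finset V) :
    ∃ B : ℕ → Finset V,
      B (A.card - μ A) = A ∧
      (∀ i, i < A.card - μ A → B i ⊂ B (i + 1)) ∧
      (∀ i, i ≤ A.card - μ A → (B i).card = μ A + i ∧ μ A ≤ μ (B i)) ∧
      μ (B 0) = (B 0).card := by
  have key : ∀ n (C : Finset V), C.card = μ A + n → μ A ≤ μ C →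
      ∃ B : ℕ → Finset V, B n = C ∧ (∀ i, i < n → B i ⊂ B (i + 1)) ∧
        (∀ i, i ≤ n → (B i).card = μ A + i ∧ μ A ≤ μ (B i)) := by
    intro n
    induction n with
    | zero =>
      intro C hcard hmu
      exact ⟨fun _ => C, rfl, fun i hi => absurd hi (by omega),
        fun i hi => by simp at hi; subst hi; exact ⟨by simpa using hcard, hmu⟩⟩
    | succ n ih =>
      intro C hcard hmu
      obtain ⟨x, hxC, hx⟩ := aux_shrink μ hbound hsub (μ A) C hmu (by omega)
      have hcard' : (C.erase x).card = μ A + n := by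
        rw [Finset.card_erase_of_mem hxC]; omega
      obtain ⟨B', hB'top, hB'chain, hB'inv⟩ := ih (C.erase x) hcard' hx
      refine ⟨fun i => if i ≤ n then B' i else C, ?_, ?_, ?_⟩
      · simp
      · intro i hi
        rcases lt_or_eq_of_le (Nat.lt_succ_iff.mp hi) with hlt | rfl
        · simpa [Nat.le_of_lt hlt, Nat.succ_le_of_lt hlt] using hB'chain i hlt
        · simp only [le_refl, if_pos, Nat.lt_irrefl, if_neg (by omega : ¬ i + 1 ≤ i)]
          rw [hB'top]
          exact Finset.erase_ssubset hxC
      · intro i hi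
        rcases Nat.lt_succ_iff_lt_or_eq.mp (Nat.lt_succ_of_le hi) with hlt | rfl
        · simpa [Nat.lt_succ_iff.mp (by omega : i < n + 1)] using hB'inv i (by omega)
        · simp only [if_neg (by omega : ¬ n + 1 ≤ n)]
          exact ⟨hcard, hmu⟩
  obtain ⟨B, htop, hchain, hinv⟩ := key (A.card - μ A) A (by have := hbound A; omega) le_rfl
  refine ⟨B, htop, hchain, hinv, ?_⟩
  obtain ⟨hc0, hm0⟩ := hinv 0 (Nat.zero_le _)
  have := hbound (B 0)
  omega
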